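/- arXiv:1510.00152 — 2 statements merged into one kernel-verified Lean document; each statement's English description precedes it below -/
import Mathlib

section
/- Let γ : ℝ → ℝ³ be a twice continuously differentiable curve with ‖γ(t)‖ = 1 for all t, satisfying the magnetic geodesic equation of the round two-sphere with magnetic form equal to the Riemannian area form, namely γ''(t) = −‖γ'(t)‖²·γ(t) + γ'(t) × γ(t) for all t ∈ ℝ (where × is the cross product in ℝ³). Then the vector w(t) := γ(t) × γ'(t) − γ(t) is independent of t, and for this constant vector w one has ⟨γ(t), w⟩ = −1 for all t ∈ ℝ. In particular, w ≠ 0 and the image of γ is contained in the intersection of the unit sphere S² with an affine plane in ℝ³ not passing through the origin. -/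
noncomputable section

/-- Componentwise derivative of a curve in `ℝ³`. -/
def vd (γ : ℝ → Fin 3 → ℝ) (t : ℝ) : Fin 3 → ℝ := fun i => deriv (fun u => γ u i) t

/-- Euclidean inner product on `ℝ³`. -/
def ip (x y : Fin 3 → ℝ) : ℝ := ∑ i, x i * y i

/-- A magnetic geodesic on the round two-sphere with magnetic form the area form:
the vector `w = γ × γ' - γ` is a constant of motion, `⟨γ, w⟩ = -1`, and `w ≠ 0`;
hence the curve lies on the intersection of `S²` with an affine plane not through
the origin. -/
theorem sphere_magnetic_geodesic_planar
    (γ : ℝ → Fin 3 → ℝ) (hγ : ContDiff ℝ 2 γ)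
    (hsphere : ∀ t : ℝ, ip (γ t) (γ t) = 1)
    (heq : ∀ t : ℝ,
      (fun i => deriv (fun s => vd γ s i) t) =
        -(ip (vd γ t) (vd γ t)) • γ t + crossProduct (vd γ t) (γ t)) :
    (∀ t s : ℝ,
        crossProduct (γ t) (vd γ t) - γ t = crossProduct (γ s) (vd γ s) - γ s) ∧
    (∀ t : ℝ, ip (γ t) (crossProduct (γ 0) (vd γ 0) - γ 0) = -1) ∧
    crossProduct (γ 0) (vd γ 0) - γ 0 ≠ 0 := by
  have hc : ∀ i, ContDiff ℝ 2 (fun u => γ u i) := fun i => contDiff_pi.mp hγ i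
  have hd1 : ∀ t i, HasDerivAt (fun u => γ u i) (vd γ t i) t := by
    intro t i
    exact (((hc i).differentiable (by norm_num)) t).hasDerivAt
  have hcg : ∀ i, ContDiff ℝ 1 (fun s => vd γ s i) := by
    intro i
    have h2 : ContDiff ℝ (1 + 1 : WithTop ℕ∞) (fun u => γ u i) := by exact_mod_cast hc i
    exact (contDiff_succ_iff_deriv.mp h2).2.2
  have hd2 : ∀ t i, HasDerivAt (fun s => vd γ s i)
      ((-(ip (vd γ t) (vd γ t)) • γ t + crossProduct (vd γ t) (γ t)) i) t := by
    intro t i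
    have h := (((hcg i).differentiable (by norm_num)) t).hasDerivAt
    rwa [show deriv (fun s => vd γ s i) t
        = (-(ip (vd γ t) (vd γ t)) • γ t + crossProduct (vd γ t) (γ t)) i
      from congrFun (heq t) i] at h
  have hs' : ∀ t, γ t 0 * γ t 0 + γ t 1 * γ t 1 + γ t 2 * γ t 2 = 1 := by
    intro t
    have := hsphere t
    simpa [ip, Fin.sum_univ_three] using this
  have horth : ∀ t, γ t 0 * vd γ t 0 + γ t 1 * vd γ t 1 + γ t 2 * vd γ t 2 = 0 := by
    intro t
    have h : HasDerivAt (fun u => γ u 0 * γ u 0 + γ u 1 * γ u 1 + γ u 2 * γ u 2)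
        ((vd γ t 0 * γ t 0 + γ t 0 * vd γ t 0) + (vd γ t 1 * γ t 1 + γ t 1 * vd γ t 1)
          + (vd γ t 2 * γ t 2 + γ t 2 * vd γ t 2)) t :=
      (((hd1 t 0).mul (hd1 t 0)).add ((hd1 t 1).mul (hd1 t 1))).add ((hd1 t 2).mul (hd1 t 2))
    have h2 : HasDerivAt (fun u => γ u 0 * γ u 0 + γ u 1 * γ u 1 + γ u 2 * γ u 2) 0 t := by
      have he : (fun u => γ u 0 * γ u 0 + γ u 1 * γ u 1 + γ u 2 * γ u 2) = fun _ => (1:ℝ) :=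
        funext fun u => hs' u
      rw [he]; exact hasDerivAt_const t 1
    have := h.unique h2
    nlinarith [this]
  -- each component of w has zero derivative
  have hw : ∀ (i : Fin 3) (t : ℝ),
      HasDerivAt (fun u => (crossProduct (γ u) (vd γ u)) i - γ u i) 0 t := by
    intro i t
    fin_cases i
    · have h : HasDerivAt (fun u => (γ u 1 * vd γ u 2 - γ u 2 * vd γ u 1) - γ u 0)
          (((vd γ t 1 * vd γ t 2 + γ t 1 * ((-(ip (vd γ t) (vd γ t)) • γ t + crossProduct (vd γ t) (γ t)) 2))
            - (vd γ t 2 * vd γ t 1 + γ t 2 * ((-(ip (vd γ t) (vd γ t)) • γ t + crossProduct (vd γ t) (γ t)) 1)))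
            - vd γ t 0) t :=
        (((hd1 t 1).mul (hd2 t 2)).sub ((hd1 t 2).mul (hd2 t 1))).sub (hd1 t 0)
      have h0 : HasDerivAt (fun u => (γ u 1 * vd γ u 2 - γ u 2 * vd γ u 1) - γ u 0) 0 t := by
        convert h using 1
        simp only [Pi.add_apply, Pi.smul_apply, smul_eq_mul, cross_apply, ip, Fin.sum_univ_three,
          Matrix.cons_val_zero, Matrix.cons_val_one, Matrix.head_cons, Matrix.cons_val_two, Matrix.tail_cons]
        linear_combination (-(vd γ t 0)) * hs' t + γ t 0 * horth t
      exact h0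
    · have h : HasDerivAt (fun u => (γ u 2 * vd γ u 0 - γ u 0 * vd γ u 2) - γ u 1)
          (((vd γ t 2 * vd γ t 0 + γ t 2 * ((-(ip (vd γ t) (vd γ t)) • γ t + crossProduct (vd γ t) (γ t)) 0))
            - (vd γ t 0 * vd γ t 2 + γ t 0 * ((-(ip (vd γ t) (vd γ t)) • γ t + crossProduct (vd γ t) (γ t)) 2)))
            - vd γ t 1) t :=
        (((hd1 t 2).mul (hd2 t 0)).sub ((hd1 t 0).mul (hd2 t 2))).sub (hd1 t 1)
      have h0 : HasDerivAt (fun u => (γ u 2 * vd γ u 0 - γ u 0 * vd γ u 2) - γ u 1) 0 t := by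
        convert h using 1
        simp only [Pi.add_apply, Pi.smul_apply, smul_eq_mul, cross_apply, ip, Fin.sum_univ_three,
          Matrix.cons_val_zero, Matrix.cons_val_one, Matrix.head_cons, Matrix.cons_val_two, Matrix.tail_cons]
        linear_combination (-(vd γ t 1)) * hs' t + γ t 1 * horth t
      exact h0
    · have h : HasDerivAt (fun u => (γ u 0 * vd γ u 1 - γ u 1 * vd γ u 0) - γ u 2)
          (((vd γ t 0 * vd γ t 1 + γ t 0 * ((-(ip (vd γ t) (vd γ t)) • γ t + crossProduct (vd γ t) (γ t)) 1))
            - (vd γ t 1 * vd γ t 0 + γ t 1 * ((-(ip (vd γ t) (vd γ t)) • γ t + crossProduct (vd γ t) (γ t)) 0)))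
            - vd γ t 2) t :=
        (((hd1 t 0).mul (hd2 t 1)).sub ((hd1 t 1).mul (hd2 t 0))).sub (hd1 t 2)
      have h0 : HasDerivAt (fun u => (γ u 0 * vd γ u 1 - γ u 1 * vd γ u 0) - γ u 2) 0 t := by
        convert h using 1
        simp only [Pi.add_apply, Pi.smul_apply, smul_eq_mul, cross_apply, ip, Fin.sum_univ_three,
          Matrix.cons_val_zero, Matrix.cons_val_one, Matrix.head_cons, Matrix.cons_val_two, Matrix.tail_cons]
        linear_combination (-(vd γ t 2)) * hs' t + γ t 2 * horth t
      exact h0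
  have hconst : ∀ t s : ℝ,
      crossProduct (γ t) (vd γ t) - γ t = crossProduct (γ s) (vd γ s) - γ s := by
    intro t s
    funext i
    have hdiff : Differentiable ℝ (fun u => (crossProduct (γ u) (vd γ u)) i - γ u i) :=
      fun x => (hw i x).differentiableAt
    have hz : ∀ x, deriv (fun u => (crossProduct (γ u) (vd γ u)) i - γ u i) x = 0 :=
      fun x => (hw i x).deriv
    have := is_const_of_deriv_eq_zero hdiff hz t s
    simpa using this
  refine ⟨hconst, ?_, ?_⟩
  · intro t
    rw [show crossProduct (γ 0) (vd γ 0) - γ 0 = crossProduct (γ t) (vd γ t) - γ t from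
      hconst 0 t]
    simp only [ip, Fin.sum_univ_three, Pi.sub_apply, cross_apply, Matrix.cons_val_zero,
      Matrix.cons_val_one, Matrix.head_cons, Matrix.cons_val_two, Matrix.tail_cons]
    linear_combination -hs' t
  · intro h
    have h2 : ip (γ 0) (crossProduct (γ 0) (vd γ 0) - γ 0) = -1 := by
      rw [show crossProduct (γ 0) (vd γ 0) - γ 0 = crossProduct (γ 0) (vd γ 0) - γ 0 from rfl]
      simp only [ip, Fin.sum_univ_three, Pi.sub_apply, cross_apply, Matrix.cons_val_zero,
        Matrix.cons_val_one, Matrix.head_cons, Matrix.cons_val_two, Matrix.tail_cons]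
      linear_combination -hs' 0
    rw [h] at h2
    simp [ip] at h2

end
end

section
/- Let H be a real Hilbert space, let F : H → ℝ be continuously differentiable with gradient ∇F, and define the bounded vector field X(x) = −∇F(x)/√(1 + ‖∇F(x)‖²). Suppose u : [0, R] → H is differentiable and solves u'(r) = X(u(r)) for all r ∈ [0, R]. Then: (i) the function r ↦ F(u(r)) is nonincreasing on [0, R]; and (ii) for every r ∈ [0, R], ‖u(r) − u(0)‖² ≤ r · (F(u(0)) − F(u(r))). -/
noncomputable section

/-- Along a flow line of the tamed negative gradient vector field
`X(x) = -∇F(x)/√(1+‖∇F(x)‖²)` of a `C¹` function `F` on a Hilbert space,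
the value of `F` is nonincreasing, and the displacement satisfies
`‖u(r) - u(0)‖² ≤ r (F(u(0)) - F(u(r)))`. -/
theorem tamed_gradient_flow_estimates
    {H : Type*} [NormedAddCommGroup H] [InnerProductSpace ℝ H] [CompleteSpace H]
    (F : H → ℝ) (hF : ContDiff ℝ 1 F)
    (R : ℝ) (hR : 0 ≤ R) (u : ℝ → H)
    (hu : ∀ r ∈ Set.Icc (0 : ℝ) R,
      HasDerivAt u
        (-(Real.sqrt (1 + ‖gradient F (u r)‖ ^ 2))⁻¹ • gradient F (u r)) r) :
    AntitoneOn (fun r => F (u r)) (Set.Icc 0 R) ∧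
    ∀ r ∈ Set.Icc (0 : ℝ) R, ‖u r - u 0‖ ^ 2 ≤ r * (F (u 0) - F (u r)) := by
  have hdF : Differentiable ℝ F := hF.differentiable one_ne_zero
  set η : ℝ → H := fun s => gradient F (u s) with hη
  set c : ℝ → ℝ := fun s => (Real.sqrt (1 + ‖η s‖ ^ 2))⁻¹ with hc
  have hsqpos : ∀ s, 0 < Real.sqrt (1 + ‖η s‖ ^ 2) := fun s =>
    Real.sqrt_pos.mpr (by positivity)
  have hc_pos : ∀ s, 0 < c s := fun s => inv_pos.mpr (hsqpos s)
  have hc_le_one : ∀ s, c s ≤ 1 := by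
    intro s
    have h1 : (1:ℝ) ≤ Real.sqrt (1 + ‖η s‖ ^ 2) := by
      nlinarith [Real.sq_sqrt (show (0:ℝ) ≤ 1 + ‖η s‖ ^ 2 by positivity),
        Real.sqrt_nonneg (1 + ‖η s‖ ^ 2), sq_nonneg ‖η s‖]
    rw [hc]
    simpa using inv_le_one_of_one_le₀ h1
  have hgc : Continuous (gradient F) := by
    have h1 : Continuous (fderiv ℝ F) := hF.continuous_fderiv one_ne_zero
    exact (InnerProductSpace.toDual ℝ H).symm.continuous.comp h1
  have huc : ContinuousOn u (Set.Icc 0 R) := fun s hs =>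
    (hu s hs).continuousAt.continuousWithinAt
  have hηc : ContinuousOn η (Set.Icc 0 R) := hgc.comp_continuousOn huc
  have hcc : ContinuousOn c (Set.Icc 0 R) :=
    (Real.continuous_sqrt.comp_continuousOn
      (continuousOn_const.add ((hηc.norm).pow 2))).inv₀ fun s _ => (hsqpos s).ne'
  have hg : ∀ s ∈ Set.Icc (0:ℝ) R,
      HasDerivAt (fun t => F (u t)) (-(c s * ‖η s‖ ^ 2)) s := by
    intro s hs
    have h1 : HasGradientAt F (η s) (u s) := (hdF (u s)).hasGradientAt
    have h2 := h1.hasFDerivAt.comp_hasDerivAt s (hu s hs)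
    convert h2 using 1
    · rfl
    · rfl
    · rfl
    rw [InnerProductSpace.toDual_apply_apply]
    rw [real_inner_smul_right, real_inner_self_eq_norm_sq]
    ring
  have hmono : AntitoneOn (fun r => F (u r)) (Set.Icc 0 R) := by
    apply antitoneOn_of_deriv_nonpos (convex_Icc 0 R)
    · exact fun s hs => (hg s hs).continuousAt.continuousWithinAt
    · intro s hs
      rw [interior_Icc] at hs
      exact ((hg s (Set.Ioo_subset_Icc_self hs)).differentiableAt).differentiableWithinAt
    · intro s hs
      rw [interior_Icc] at hs
      rw [(hg s (Set.Ioo_subset_Icc_self hs)).deriv]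
      have := hc_pos s
      nlinarith [sq_nonneg ‖η s‖]
  refine ⟨hmono, ?_⟩
  rintro r ⟨hr0, hrR⟩
  rcases eq_or_lt_of_le hr0 with rfl | hrpos
  · simp
  have hIcc : Set.Icc (0:ℝ) r ⊆ Set.Icc 0 R := Set.Icc_subset_Icc le_rfl hrR
  have huIcc : Set.uIcc (0:ℝ) r = Set.Icc 0 r := Set.uIcc_of_le hr0
  have hsub : Set.uIcc (0:ℝ) r ⊆ Set.Icc 0 R := huIcc ▸ hIcc
  set u' : ℝ → H := fun s => -(c s) • η s with hu'
  have hu'c : ContinuousOn u' (Set.Icc 0 R) := (hcc.neg).smul hηc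
  have hint_u' : IntervalIntegrable u' MeasureTheory.volume 0 r :=
    (hu'c.mono hsub).intervalIntegrable
  have hftc_u : ∫ s in (0:ℝ)..r, u' s = u r - u 0 := by
    apply intervalIntegral.integral_eq_sub_of_hasDerivAt
    · intro s hs
      have := hu s (hsub hs)
      simpa [hu', neg_smul] using this
    · exact hint_u'
  set g' : ℝ → ℝ := fun s => -(c s * ‖η s‖ ^ 2) with hg'
  have hg'c : ContinuousOn g' (Set.Icc 0 R) := ((hcc.mul ((hηc.norm).pow 2)).neg)
  have hint_g' : IntervalIntegrable g' MeasureTheory.volume 0 r :=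
    (hg'c.mono hsub).intervalIntegrable
  have hftc_g : ∫ s in (0:ℝ)..r, g' s = F (u r) - F (u 0) := by
    apply intervalIntegral.integral_eq_sub_of_hasDerivAt
    · intro s hs
      exact hg s (hsub hs)
    · exact hint_g'
  have hcomm := (innerSL ℝ (u r - u 0)).intervalIntegral_comp_comm hint_u'
  rw [hftc_u] at hcomm
  have hvv : ‖u r - u 0‖ ^ 2 = ∫ s in (0:ℝ)..r, (inner ℝ (u r - u 0) (u' s) : ℝ) := by
    rw [← real_inner_self_eq_norm_sq]
    exact hcomm.symm
  have hpt : ∀ s ∈ Set.Icc (0:ℝ) r,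
      (inner ℝ (u r - u 0) (u' s) : ℝ)
        ≤ ‖u r - u 0‖ ^ 2 / (2 * r) + (r / 2) * (-(g' s)) := by
    intro s hs
    have h1 : (inner ℝ (u r - u 0) (u' s) : ℝ) ≤ ‖u r - u 0‖ * ‖u' s‖ :=
      real_inner_le_norm _ _
    have h2 : ‖u' s‖ ^ 2 = (c s) ^ 2 * ‖η s‖ ^ 2 := by
      rw [hu']
      simp only [norm_smul, norm_neg, Real.norm_eq_abs, abs_of_pos (hc_pos s)]
      ring
    have hq : -(g' s) = c s * ‖η s‖ ^ 2 := by simp [hg']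
    have h3 : ‖u' s‖ ^ 2 ≤ -(g' s) := by
      rw [h2, hq]
      have := hc_pos s
      have := hc_le_one s
      nlinarith [sq_nonneg ‖η s‖]
    have h4 : ‖u r - u 0‖ * ‖u' s‖
        ≤ ‖u r - u 0‖ ^ 2 / (2 * r) + (r / 2) * ‖u' s‖ ^ 2 := by
      rw [div_add' _ _ _ (by positivity : (2:ℝ) * r ≠ 0)]
      rw [le_div_iff₀ (by positivity : (0:ℝ) < 2 * r)]
      nlinarith [sq_nonneg (‖u r - u 0‖ - r * ‖u' s‖)]
    have h5 : (r / 2) * ‖u' s‖ ^ 2 ≤ (r / 2) * (-(g' s)) :=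
      mul_le_mul_of_nonneg_left h3 (by linarith)
    linarith
  have hint_lhs : IntervalIntegrable (fun s => (inner ℝ (u r - u 0) (u' s) : ℝ))
      MeasureTheory.volume 0 r := by
    apply ContinuousOn.intervalIntegrable
    exact continuousOn_const.inner (hu'c.mono hsub)
  have hint_rhs : IntervalIntegrable
      (fun s => ‖u r - u 0‖ ^ 2 / (2 * r) + (r / 2) * (-(g' s)))
      MeasureTheory.volume 0 r := by
    apply ContinuousOn.intervalIntegrable
    exact continuousOn_const.add (continuousOn_const.mul (hg'c.mono hsub).neg)
  have hle : ∫ s in (0:ℝ)..r, (inner ℝ (u r - u 0) (u' s) : ℝ)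
      ≤ ∫ s in (0:ℝ)..r, (‖u r - u 0‖ ^ 2 / (2 * r) + (r / 2) * (-(g' s))) :=
    intervalIntegral.integral_mono_on hr0 hint_lhs hint_rhs hpt
  have h2nd : ∫ s in (0:ℝ)..r, (r / 2) * (-(g' s)) = (r / 2) * (F (u 0) - F (u r)) := by
    have heq : ∀ s : ℝ, (r / 2) * (-(g' s)) = (-(r / 2)) * g' s := fun s => by ring
    simp_rw [heq]
    rw [intervalIntegral.integral_const_mul, hftc_g]
    ring
  have hBint : IntervalIntegrable (fun s => (r / 2) * (-(g' s)))
      MeasureTheory.volume 0 r := by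
    apply ContinuousOn.intervalIntegrable
    exact continuousOn_const.mul (hg'c.mono hsub).neg
  have hrhs : ∫ s in (0:ℝ)..r, (‖u r - u 0‖ ^ 2 / (2 * r) + (r / 2) * (-(g' s)))
      = ‖u r - u 0‖ ^ 2 / 2 + (r / 2) * (F (u 0) - F (u r)) := by
    rw [intervalIntegral.integral_add intervalIntegrable_const hBint,
      intervalIntegral.integral_const, h2nd, smul_eq_mul]
    have : (r - 0) * (‖u r - u 0‖ ^ 2 / (2 * r)) = ‖u r - u 0‖ ^ 2 / 2 := by
      field_simp
      ring
    rw [this]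
  have hfinal : ‖u r - u 0‖ ^ 2
      ≤ ‖u r - u 0‖ ^ 2 / 2 + (r / 2) * (F (u 0) - F (u r)) :=
    hvv.trans_le (by rw [hrhs] at hle; exact hle)
  linarith

end
end
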